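/- arXiv:1311.4394 — 2 statements merged into one kernel-verified Lean document; each statement's English description precedes it below -/
import Mathlib

section
/- The function H(x) = 2x·lg(1/x) + (1−2x)·lg(2/(1−2x)) + x + 1, defined for 0 < x < 1/2, attains its maximum at x = 1 − √2/2, and the maximum value is 2 + lg(1+√2), which is less than 3.272. -/
/-- `H(x) = 2x·lg(1/x) + (1−2x)·lg(2/(1−2x)) + x + 1`. -/
noncomputable def H (x : ℝ) : ℝ :=
  2 * x * Real.logb 2 (1 / x) + (1 - 2 * x) * Real.logb 2 (2 / (1 - 2 * x)) + x + 1

/-- Two-term Gibbs inequality: `p₁ log(q₁/p₁) + p₂ log(q₂/p₂) ≤ log (q₁ + q₂)`. -/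
lemma gibbs2 {p₁ p₂ q₁ q₂ : ℝ} (hp₁ : 0 < p₁) (hp₂ : 0 < p₂) (hq₁ : 0 < q₁) (hq₂ : 0 < q₂)
    (hsum : p₁ + p₂ = 1) :
    p₁ * Real.log (q₁ / p₁) + p₂ * Real.log (q₂ / p₂) ≤ Real.log (q₁ + q₂) := by
  have hSpos : 0 < q₁ + q₂ := by positivity
  have key : ∀ p q : ℝ, 0 < p → 0 < q →
      p * Real.log (q / p) ≤ p * Real.log (q₁ + q₂) + (q / (q₁ + q₂) - p) := by
    intro p q hp hq
    have h1 : Real.log (q / (p * (q₁ + q₂))) ≤ q / (p * (q₁ + q₂)) - 1 :=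
      Real.log_le_sub_one_of_pos (by positivity)
    have h2 : Real.log (q / p) = Real.log (q / (p * (q₁ + q₂))) + Real.log (q₁ + q₂) := by
      rw [← Real.log_mul (by positivity) hSpos.ne']
      congr 1
      field_simp
    have h3 : p * (q / (p * (q₁ + q₂)) - 1) = q / (q₁ + q₂) - p := by
      field_simp
    have h4 := mul_le_mul_of_nonneg_left h1 hp.le
    rw [h2]
    nlinarith
  have k1 := key p₁ q₁ hp₁ hq₁
  have k2 := key p₂ q₂ hp₂ hq₂
  have hq : q₁ / (q₁ + q₂) + q₂ / (q₁ + q₂) = 1 := by field_simp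
  have hsplit : p₁ * Real.log (q₁ + q₂) + p₂ * Real.log (q₁ + q₂) = Real.log (q₁ + q₂) := by
    rw [← add_mul, hsum, one_mul]
  linarith

/-- On `(0, 1/2)`, `H` attains its maximum at `x = 1 − √2/2`, and the maximum value is
`2 + lg(1+√2) < 3.272`. -/
theorem stmt11 :
    (0 < 1 - Real.sqrt 2 / 2 ∧ 1 - Real.sqrt 2 / 2 < 1 / 2) ∧
    (∀ x : ℝ, 0 < x → x < 1 / 2 → H x ≤ H (1 - Real.sqrt 2 / 2)) ∧
    H (1 - Real.sqrt 2 / 2) = 2 + Real.logb 2 (1 + Real.sqrt 2) ∧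
    2 + Real.logb 2 (1 + Real.sqrt 2) < 3.272 := by
  set s : ℝ := Real.sqrt 2 with hsdef
  have hs0 : 0 < s := Real.sqrt_pos.mpr (by norm_num)
  have hs2 : s ^ 2 = 2 := Real.sq_sqrt (by norm_num)
  have hs1 : 1 < s := by nlinarith
  have hslt : s < 1.41421357 := by nlinarith
  have hlog2 : (0:ℝ) < Real.log 2 := Real.log_pos (by norm_num)
  have hlogs : Real.log s = Real.log 2 / 2 := Real.log_sqrt (by norm_num)
  have hlog4 : Real.log 4 = 2 * Real.log 2 := by
    rw [show (4:ℝ) = 2 ^ 2 by norm_num, Real.log_pow]; push_cast; ring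
  have h1s : (0:ℝ) < 1 + s := by linarith
  -- exact value at the maximizer
  have hval : H (1 - s / 2) = 2 + Real.logb 2 (1 + s) := by
    have hd1 : (1:ℝ) / (1 - s / 2) = s * (1 + s) := by
      rw [div_eq_iff (by nlinarith : (1:ℝ) - s / 2 ≠ 0)]
      nlinarith
    have hd2 : (2:ℝ) / (1 - 2 * (1 - s / 2)) = 2 * (1 + s) := by
      rw [div_eq_iff (by nlinarith : (1:ℝ) - 2 * (1 - s / 2) ≠ 0)]
      nlinarith
    have l1 : Real.logb 2 (s * (1 + s)) = 1 / 2 + Real.logb 2 (1 + s) := by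
      rw [Real.logb_mul hs0.ne' h1s.ne']
      unfold Real.logb
      rw [hlogs]
      field_simp
    have l2 : Real.logb 2 (2 * (1 + s)) = 1 + Real.logb 2 (1 + s) := by
      rw [Real.logb_mul two_ne_zero h1s.ne', Real.logb_self_eq_one (by norm_num)]
    unfold H
    rw [hd1, hd2, l1, l2]
    ring
  refine ⟨⟨by nlinarith, by nlinarith⟩, ?_, hval, ?_⟩
  · -- maximality
    intro x hx hx2
    rw [hval]
    have h12x : 0 < 1 - 2 * x := by linarith
    have g := gibbs2 (p₁ := 2 * x) (p₂ := 1 - 2 * x) (q₁ := 4 * s) (q₂ := 4)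
      (by linarith) h12x (by positivity) (by norm_num) (by ring)
    have r1 : Real.log (4 * s / (2 * x)) =
        Real.log 2 + Real.log 2 / 2 - Real.log x := by
      rw [Real.log_div (by positivity) (by positivity),
        Real.log_mul (by norm_num) hs0.ne', Real.log_mul two_ne_zero hx.ne', hlog4, hlogs]
      ring
    have r2 : Real.log (4 / (1 - 2 * x)) = 2 * Real.log 2 - Real.log (1 - 2 * x) := by
      rw [Real.log_div (by norm_num) h12x.ne', hlog4]
    have r3 : Real.log (4 * s + 4) = 2 * Real.log 2 + Real.log (1 + s) := by
      rw [show 4 * s + 4 = 4 * (1 + s) by ring, Real.log_mul (by norm_num) h1s.ne', hlog4]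
    rw [r1, r2, r3] at g
    have hln : 2 * x * Real.log (1 / x) + (1 - 2 * x) * Real.log (2 / (1 - 2 * x)) ≤
        (1 - x) * Real.log 2 + Real.log (1 + s) := by
      rw [one_div, Real.log_inv, Real.log_div two_ne_zero h12x.ne']
      nlinarith [g]
    unfold H Real.logb
    rw [← sub_nonpos]
    have hexp : 2 * x * (Real.log (1 / x) / Real.log 2) +
        (1 - 2 * x) * (Real.log (2 / (1 - 2 * x)) / Real.log 2) + x + 1 -
        (2 + Real.log (1 + s) / Real.log 2) =
        (2 * x * Real.log (1 / x) + (1 - 2 * x) * Real.log (2 / (1 - 2 * x)) -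
          ((1 - x) * Real.log 2 + Real.log (1 + s))) / Real.log 2 := by
      field_simp
      ring
    rw [hexp]
    exact div_nonpos_of_nonpos_of_nonneg (by linarith) hlog2.le
  · -- numeric bound
    have hpow : (1 + s) ^ 125 < 2 ^ 159 := by
      calc (1 + s) ^ 125 < (2.41421357 : ℝ) ^ 125 := by
            exact pow_lt_pow_left₀ (by linarith) (by positivity) (by norm_num)
        _ < 2 ^ 159 := by norm_num
    have hlt : 125 * Real.log (1 + s) < 159 * Real.log 2 := by
      have := Real.log_lt_log (by positivity) hpow
      rwa [Real.log_pow, Real.log_pow, Nat.cast_ofNat, Nat.cast_ofNat] at this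
    have : Real.logb 2 (1 + s) < 159 / 125 := by
      rw [Real.logb, div_lt_div_iff₀ hlog2 (by norm_num)]
      linarith
    linarith [this]
end

section
/- If t(n) are the coefficients of the power series T(x) satisfying T(x) = x + 2xT(x) + 2xT(x)², then lg t(n) ≥ n·lg(2/(√2−1)) − O(log n); in particular lg t(n) ≥ 2.271·n − O(log n). -/
open PowerSeries Finset

noncomputable section
namespace Stmt13

def pser (k : ℕ) : PowerSeries ℝ := X ^ k * (1 + X) ^ (k + 1)

lemma coeff_onepX_pow (m n : ℕ) :
    coeff n ((1 + X : PowerSeries ℝ) ^ m) = (m.choose n : ℝ) := by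
  have h : ((1 + X : PowerSeries ℝ)) = ((1 + Polynomial.X : Polynomial ℝ) : PowerSeries ℝ) := by
    simp
  rw [h, ← Polynomial.coe_pow, Polynomial.coeff_coe, Polynomial.coeff_one_add_X_pow]

lemma coeff_pser (n k : ℕ) :
    coeff n (pser k) = if k ≤ n then ((k+1).choose (n-k) : ℝ) else 0 := by
  rw [pser, coeff_X_pow_mul']
  split_ifs with h
  · rw [coeff_onepX_pow]
  · rfl

lemma coeff_pser_zero {n k : ℕ} (h : n < k) : coeff n (pser k) = 0 := by
  rw [coeff_pser, if_neg (by omega)]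

lemma coeff_pser_nonneg (n k : ℕ) : 0 ≤ coeff n (pser k) := by
  rw [coeff_pser]; split_ifs <;> positivity

lemma X_pser_mul (i j : ℕ) : X * pser i * pser j = pser (i+j+1) := by
  unfold pser; ring

def aa (n : ℕ) : ℝ := ∑ k ∈ range (n+1), (catalan k : ℝ) * coeff n (pser k)

lemma aa_eq {n M : ℕ} (h : n < M) :
    aa n = ∑ k ∈ range M, (catalan k : ℝ) * coeff n (pser k) := by
  refine Finset.sum_subset (Finset.range_subset_range.2 h) ?_
  intro k hk hk'
  rw [coeff_pser_zero (by simp at hk hk' ⊢; omega), mul_zero]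

lemma sum_swap_lemma (n : ℕ) (h : ℕ → ℕ → ℝ) (hv : ∀ i j, n ≤ i + j → h i j = 0) :
    ∑ i ∈ range n, ∑ j ∈ range n, h i j
      = ∑ s ∈ range n, ∑ pq ∈ antidiagonal s, h pq.1 pq.2 := by
  have hd : (↑(range n) : Set ℕ).PairwiseDisjoint (fun s => (antidiagonal s : Finset (ℕ × ℕ))) := by
    intro a _ b _ hab
    simp only [Finset.disjoint_left]
    rintro ⟨p, q⟩ hp hq
    simp only [Finset.HasAntidiagonal.mem_antidiagonal] at hp hq
    omega
  rw [← Finset.sum_biUnion hd, ← Finset.sum_product']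
  symm
  refine Finset.sum_subset ?_ ?_
  · rintro ⟨p, q⟩ hp
    simp only [Finset.mem_biUnion, Finset.HasAntidiagonal.mem_antidiagonal, Finset.mem_range,
      Finset.mem_product] at hp ⊢
    obtain ⟨s, hs, rfl⟩ := hp
    omega
  · rintro ⟨p, q⟩ hp hnp
    simp only [Finset.mem_biUnion, Finset.HasAntidiagonal.mem_antidiagonal, Finset.mem_range,
      Finset.mem_product] at hp hnp
    apply hv
    by_contra hc
    exact hnp ⟨p + q, by omega, by simp⟩

lemma coeff_succ_pser (m i j : ℕ) :
    coeff (m+1) (pser (i+j+1)) = coeff m (pser i * pser j) := by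
  rw [← X_pser_mul, mul_assoc, coeff_succ_X_mul]

lemma aa_rec (m : ℕ) :
    aa (m+1) = (if m = 0 then 1 else 0) + ∑ pq ∈ antidiagonal m, aa pq.1 * aa pq.2 := by
  have hsum : ∑ pq ∈ antidiagonal m, aa pq.1 * aa pq.2
      = ∑ i ∈ range (m+1), ∑ j ∈ range (m+1),
          ((catalan i : ℝ) * (catalan j : ℝ)) * coeff (m+1) (pser (i+j+1)) := by
    have step1 : ∀ pq ∈ antidiagonal m, aa pq.1 * aa pq.2
        = ∑ i ∈ range (m+1), ∑ j ∈ range (m+1),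
            ((catalan i : ℝ) * (catalan j : ℝ)) *
              (coeff pq.1 (pser i) * coeff pq.2 (pser j)) := by
      intro pq hpq
      rw [Finset.HasAntidiagonal.mem_antidiagonal] at hpq
      rw [aa_eq (show pq.1 < m+1 by omega), aa_eq (show pq.2 < m+1 by omega),
        Finset.sum_mul_sum]
      exact Finset.sum_congr rfl fun i _ => Finset.sum_congr rfl fun j _ => by ring
    rw [Finset.sum_congr rfl step1, Finset.sum_comm]
    refine Finset.sum_congr rfl fun i _ => ?_
    rw [Finset.sum_comm]
    refine Finset.sum_congr rfl fun j _ => ?_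
    rw [← Finset.mul_sum, coeff_succ_pser, PowerSeries.coeff_mul]
  rw [hsum, sum_swap_lemma (m+1)
      (fun i j => ((catalan i : ℝ) * (catalan j : ℝ)) * coeff (m+1) (pser (i+j+1)))
      (fun i j hij => by beta_reduce; rw [coeff_pser_zero (by omega), mul_zero])]
  have step2 : ∀ s ∈ range (m+1),
      ∑ pq ∈ antidiagonal s, ((catalan pq.1 : ℝ) * (catalan pq.2 : ℝ)) *
          coeff (m+1) (pser (pq.1+pq.2+1))
        = (catalan (s+1) : ℝ) * coeff (m+1) (pser (s+1)) := by
    intro s _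
    have : ∀ pq ∈ antidiagonal s, ((catalan pq.1 : ℝ) * (catalan pq.2 : ℝ)) *
          coeff (m+1) (pser (pq.1+pq.2+1))
        = ((catalan pq.1 : ℝ) * (catalan pq.2 : ℝ)) * coeff (m+1) (pser (s+1)) := by
      intro pq hpq
      rw [Finset.HasAntidiagonal.mem_antidiagonal] at hpq
      rw [hpq]
    rw [Finset.sum_congr rfl this, ← Finset.sum_mul, catalan_succ']
    push_cast
    ring
  rw [Finset.sum_congr rfl step2]
  have expand : aa (m+1) = (∑ s ∈ range (m+1), (catalan (s+1) : ℝ) * coeff (m+1) (pser (s+1)))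
      + (catalan 0 : ℝ) * coeff (m+1) (pser 0) := by
    rw [aa]
    exact Finset.sum_range_succ' _ (m+1)
  rw [expand]
  have h0 : (catalan 0 : ℝ) * coeff (m+1) (pser 0) = if m = 0 then 1 else 0 := by
    rw [coeff_pser, catalan_zero]
    rcases m with _ | m <;> simp [Nat.choose]
  rw [h0]
  ring

theorem coeff_eq_aa (T : PowerSeries ℝ)
    (h0 : PowerSeries.constantCoeff T = 0)
    (heq : T = X + 2 * X * T + 2 * X * T ^ 2) :
    ∀ n, coeff n (1 + 2 * T) = aa n := by
  have hV : (1 + 2*T : PowerSeries ℝ) = 1 + X + X * (1+2*T)^2 := by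
    linear_combination (2 : PowerSeries ℝ) * heq
  intro n
  induction n using Nat.strong_induction_on with
  | _ n ih =>
    match n with
    | 0 =>
      have : aa 0 = 1 := by
        simp [aa, coeff_pser]
      rw [this]
      simp [coeff_zero_eq_constantCoeff, map_add, map_mul, h0]
    | m+1 =>
      conv_lhs => rw [hV]
      rw [map_add, map_add, coeff_one, coeff_X, coeff_succ_X_mul, sq, coeff_mul]
      have : ∑ pq ∈ antidiagonal m, coeff pq.1 (1+2*T) * coeff pq.2 (1+2*T)
          = ∑ pq ∈ antidiagonal m, aa pq.1 * aa pq.2 := by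
        refine Finset.sum_congr rfl fun pq hpq => ?_
        rw [Finset.HasAntidiagonal.mem_antidiagonal] at hpq
        rw [ih pq.1 (by omega), ih pq.2 (by omega)]
      rw [this, aa_rec]
      have : (if (m+1 : ℕ) = 1 then (1:ℝ) else 0) = (if m = 0 then 1 else 0) := by
        simp
      rw [this]
      ring_nf
      simp

theorem coeff_T_eq (T : PowerSeries ℝ)
    (h0 : PowerSeries.constantCoeff T = 0)
    (heq : T = X + 2 * X * T + 2 * X * T ^ 2) :
    ∀ n, 1 ≤ n → coeff n T = aa n / 2 := by
  intro n hn
  have h := coeff_eq_aa T h0 heq n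
  rw [map_add] at h
  have h1 : coeff n (1 : PowerSeries ℝ) = 0 := by
    rw [coeff_one, if_neg (by omega)]
  have h2 : coeff n (2 * T) = 2 * coeff n T := by
    have : (2 : PowerSeries ℝ) = C 2 := by
      simp [map_ofNat]
    rw [this, coeff_C_mul]
  rw [h1, h2] at h
  linarith

def E (M : ℕ) : PowerSeries ℝ := ∑ k ∈ range M, ((4:ℝ)^k) • pser k

lemma smul_four (q : PowerSeries ℝ) : (4:ℝ) • q = 4 * q := by
  rw [Algebra.smul_def]
  norm_num [map_ofNat]

lemma teleE (M : ℕ) : (1 - 4*X - 4*X^2 : PowerSeries ℝ) * E M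
    = (1 + X) - ((4:ℝ)^M) • pser M := by
  induction M with
  | zero =>
    simp [E, pser]
  | succ M ih =>
    rw [E, Finset.sum_range_succ, ← E, mul_add, ih]
    have hstep : (X*(1+X)) * pser M = pser (M+1) := by
      unfold pser; ring
    have h2 : (1 - 4*X - 4*X^2 : PowerSeries ℝ) * pser M = pser M - 4 * pser (M+1) := by
      linear_combination (-4 : PowerSeries ℝ) * hstep
    rw [mul_smul_comm, h2, smul_sub]
    have h3 : ((4:ℝ)^M) • (4 * pser (M+1)) = ((4:ℝ)^(M+1)) • pser (M+1) := by
      rw [← smul_four, smul_smul, pow_succ, mul_comm]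
    rw [h3]
    ring

def sB (n : ℕ) : ℝ := ∑ k ∈ range (n+1), (4:ℝ)^k * coeff n (pser k)

lemma sB_coeff {n M : ℕ} (h : n < M) : sB n = coeff n (E M) := by
  rw [E, map_sum]
  rw [sB]
  rw [Finset.sum_subset (Finset.range_subset_range.2 h)]
  · exact Finset.sum_congr rfl fun k _ => by rw [map_smul, smul_eq_mul]
  · intro k hk hk'
    rw [coeff_pser_zero (by simp at hk hk' ⊢; omega), mul_zero]

lemma sB_rec (n : ℕ) : sB (n+2) = 4 * sB (n+1) + 4 * sB n := by
  have h := teleE (n+3)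
  have happ := congrArg (coeff (n+2)) h
  have hL : (1 - 4*X - 4*X^2 : PowerSeries ℝ) * E (n+3)
      = E (n+3) - 4 * (X * E (n+3)) - 4 * (X^2 * E (n+3)) := by ring
  rw [hL] at happ
  have c1 : coeff (n+2) (X * E (n+3)) = coeff (n+1) (E (n+3)) := coeff_succ_X_mul _ _
  have c2 : coeff (n+2) (X^2 * E (n+3)) = coeff n (E (n+3)) := coeff_X_pow_mul _ 2 n
  have c3 : coeff (n+2) ((1 + X : PowerSeries ℝ)) = 0 := by
    rw [map_add, coeff_one, coeff_X]
    simp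
  have c4 : coeff (n+2) (((4:ℝ)^(n+3)) • pser (n+3)) = 0 := by
    rw [map_smul, coeff_pser_zero (by omega), smul_zero]
  have c5 : coeff (n+2) ((4:PowerSeries ℝ) * (X * E (n+3)))
      = 4 * coeff (n+1) (E (n+3)) := by
    have : (4 : PowerSeries ℝ) = C 4 := by simp [map_ofNat]
    rw [this, coeff_C_mul, c1]
  have c6 : coeff (n+2) ((4:PowerSeries ℝ) * (X^2 * E (n+3)))
      = 4 * coeff n (E (n+3)) := by
    have : (4 : PowerSeries ℝ) = C 4 := by simp [map_ofNat]
    rw [this, coeff_C_mul, c2]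
  rw [map_sub, map_sub, map_sub, c5, c6, c3, c4] at happ
  rw [sB_coeff (show n+2 < n+3 by omega), sB_coeff (show n+1 < n+3 by omega),
    sB_coeff (show n < n+3 by omega)]
  linarith

lemma sqrt2_lt : Real.sqrt 2 ≤ 1.5 := by
  nlinarith [Real.sq_sqrt (show (0:ℝ) ≤ 2 by norm_num), Real.sqrt_nonneg 2]

lemma sqrt2_gt : (1.4142:ℝ) ≤ Real.sqrt 2 := by
  nlinarith [Real.sq_sqrt (show (0:ℝ) ≤ 2 by norm_num), Real.sqrt_nonneg 2]

lemma sB_ge (n : ℕ) : (2 + 2*Real.sqrt 2)^n ≤ sB n := by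
  have hr2 : (2 + 2*Real.sqrt 2)^2 = 4*(2 + 2*Real.sqrt 2) + 4 := by
    nlinarith [Real.sq_sqrt (show (0:ℝ) ≤ 2 by norm_num)]
  have hrpos : (0:ℝ) < 2 + 2*Real.sqrt 2 := by positivity
  have hs0 : sB 0 = 1 := by
    simp [sB, coeff_pser]
  have hs1 : sB 1 = 5 := by
    rw [sB]
    rw [Finset.sum_range_succ, Finset.sum_range_succ, Finset.sum_range_zero]
    rw [coeff_pser, coeff_pser]
    norm_num [Nat.choose]
  induction n using Nat.strong_induction_on with
  | _ n ih =>
    match n with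
    | 0 => rw [hs0]; norm_num
    | 1 =>
      rw [hs1, pow_one]
      nlinarith [sqrt2_lt]
    | m+2 =>
      rw [sB_rec]
      have i1 := ih (m+1) (by omega)
      have i2 := ih m (by omega)
      have : (2 + 2*Real.sqrt 2)^(m+2) = (4*(2 + 2*Real.sqrt 2) + 4) * (2 + 2*Real.sqrt 2)^m := by
        rw [← hr2]; ring
      rw [this]
      have hpm : (0:ℝ) ≤ (2 + 2*Real.sqrt 2)^m := by positivity
      have hp1 : (2 + 2*Real.sqrt 2)^(m+1) = (2 + 2*Real.sqrt 2) * (2 + 2*Real.sqrt 2)^m := by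
        rw [pow_succ]; ring
      nlinarith [hpm]

lemma cat_ge (k : ℕ) : (4:ℝ)^k ≤ ((2*k+1)*(k+1) : ℝ) * (catalan k : ℝ) := by
  have h1 := Nat.four_pow_le_two_mul_add_one_mul_central_binom k
  have h2 := succ_mul_catalan_eq_centralBinom k
  rw [Nat.centralBinom_eq_two_mul_choose] at h2
  have : 4^k ≤ (2*k+1) * ((k+1) * catalan k) := by rw [h2]; exact h1
  calc (4:ℝ)^k = ((4^k : ℕ) : ℝ) := by push_cast; ring
    _ ≤ (((2*k+1) * ((k+1) * catalan k) : ℕ) : ℝ) := by exact_mod_cast this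
    _ = ((2*k+1)*(k+1) : ℝ) * (catalan k : ℝ) := by push_cast; ring

lemma aa_ge (n : ℕ) :
    (2 + 2*Real.sqrt 2)^n / (((2*n+1)*(n+1) : ℕ) : ℝ) ≤ aa n := by
  set D : ℝ := (((2*n+1)*(n+1) : ℕ) : ℝ) with hD
  have hDpos : (0:ℝ) < D := by positivity
  have hsum : sB n ≤ D * aa n := by
    rw [sB, aa, Finset.mul_sum]
    refine Finset.sum_le_sum fun k hk => ?_
    simp only [Finset.mem_range] at hk
    have hk' : k ≤ n := by omega
    have h1 : (4:ℝ)^k ≤ D * (catalan k : ℝ) := by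
      refine le_trans (cat_ge k) ?_
      have hcat : (0:ℝ) ≤ (catalan k : ℝ) := by positivity
      have : ((2*k+1)*(k+1) : ℝ) ≤ D := by
        rw [hD]; push_cast
        have : (k:ℝ) ≤ n := by exact_mod_cast hk'
        nlinarith
      nlinarith
    have := coeff_pser_nonneg n k
    calc (4:ℝ)^k * coeff n (pser k) ≤ (D * (catalan k : ℝ)) * coeff n (pser k) := by
          exact mul_le_mul_of_nonneg_right h1 this
      _ = D * ((catalan k : ℝ) * coeff n (pser k)) := by ring
  rw [div_le_iff₀ hDpos]
  nlinarith [sB_ge n]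

lemma r_eq : 2 / (Real.sqrt 2 - 1) = 2 + 2*Real.sqrt 2 := by
  have h2 : Real.sqrt 2 ^ 2 = 2 := Real.sq_sqrt (by norm_num)
  have hne : Real.sqrt 2 - 1 ≠ 0 := by nlinarith [sqrt2_gt]
  field_simp
  nlinarith

lemma part1 : Real.logb 2 (2 / (Real.sqrt 2 - 1)) > 2.271 := by
  rw [r_eq]
  have h1 : (4.8284:ℝ) ≤ 2 + 2*Real.sqrt 2 := by nlinarith [sqrt2_gt]
  have h2 : (2.271 : ℝ) < Real.logb 2 4.8284 := by
    rw [Real.lt_logb_iff_rpow_lt (by norm_num) (by norm_num)]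
    have key : ((2:ℝ) ^ (2.271:ℝ)) ^ (1000:ℕ) < (4.8284:ℝ) ^ (1000:ℕ) := by
      have e1 : ((2:ℝ) ^ (2.271:ℝ)) ^ (1000:ℕ) = (2:ℝ) ^ (2271:ℕ) := by
        rw [← Real.rpow_natCast ((2:ℝ) ^ (2.271:ℝ)) 1000, ← Real.rpow_mul (by norm_num)]
        norm_num
      rw [e1, show (4.8284:ℝ) = 12071 / 2500 by norm_num, div_pow, lt_div_iff₀ (by positivity)]
      rw [show (2271:ℕ) = 227 * 10 + 1 from rfl, pow_succ, pow_mul, show (1000:ℕ) = 100 * 10 from rfl,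
        pow_mul, pow_mul]
      norm_num
    have hpos : (0:ℝ) ≤ 4.8284 := by norm_num
    exact lt_of_pow_lt_pow_left₀ 1000 hpos key
  calc (2.271:ℝ) < Real.logb 2 4.8284 := h2
    _ ≤ Real.logb 2 (2 + 2*Real.sqrt 2) := by
        rw [Real.logb_le_logb (by norm_num) (by norm_num) (by positivity)]
        exact h1

end Stmt13
end

open Stmt13 in
/-- If `t(n)` are the coefficients of the power series `T` satisfying
`T = x + 2xT + 2xT²`, then `lg t(n) ≥ n·lg(2/(√2−1)) − O(log n)`;
in particular `lg t(n) ≥ 2.271·n − O(log n)` since `lg(2/(√2−1)) > 2.271`. -/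
theorem stmt13 (T : PowerSeries ℝ)
    (h0 : PowerSeries.constantCoeff T = 0)
    (heq : T = PowerSeries.X + 2 * PowerSeries.X * T + 2 * PowerSeries.X * T ^ 2) :
    Real.logb 2 (2 / (Real.sqrt 2 - 1)) > 2.271 ∧
    ∃ C : ℝ, 0 < C ∧ ∀ n : ℕ, 2 ≤ n →
      (n : ℝ) * Real.logb 2 (2 / (Real.sqrt 2 - 1)) - C * Real.logb 2 n ≤
        Real.logb 2 (PowerSeries.coeff n T) := by
  refine ⟨part1, 5, by norm_num, ?_⟩
  intro n hn
  set r : ℝ := 2 + 2*Real.sqrt 2 with hr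
  have hrpos : (0:ℝ) < r := by positivity
  have hreq : 2 / (Real.sqrt 2 - 1) = r := r_eq
  rw [hreq]
  set D : ℝ := (((2*n+1)*(n+1) : ℕ) : ℝ) with hD
  have hDpos : (0:ℝ) < D := by positivity
  have hL : r^n / (2*D) ≤ coeff n T := by
    have h1 := aa_ge n
    have h2 := coeff_T_eq T h0 heq n (by omega)
    rw [h2]
    rw [div_le_div_iff₀ (by positivity) (by norm_num)]
    rw [div_le_iff₀ hDpos] at h1
    nlinarith
  have hLpos : (0:ℝ) < r^n / (2*D) := by positivity
  have hcpos : (0:ℝ) < coeff n T := lt_of_lt_of_le hLpos hL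
  have step1 : Real.logb 2 (r^n / (2*D)) ≤ Real.logb 2 (coeff n T) := by
    rw [Real.logb_le_logb (by norm_num) hLpos hcpos]
    exact hL
  have step2 : Real.logb 2 (r^n / (2*D)) = n * Real.logb 2 r - Real.logb 2 (2*D) := by
    rw [Real.logb_div (by positivity) (by positivity), Real.logb_pow]
  have hnR : (2:ℝ) ≤ (n:ℝ) := by exact_mod_cast hn
  have hDle : 2*D ≤ (n:ℝ)^5 := by
    rw [hD]; push_cast
    nlinarith [sq_nonneg ((n:ℝ) - 2), sq_nonneg (n:ℝ), pow_le_pow_left₀ (by norm_num : (0:ℝ) ≤ 2) hnR 3]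
  have step3 : Real.logb 2 (2*D) ≤ 5 * Real.logb 2 n := by
    have : Real.logb 2 (2*D) ≤ Real.logb 2 ((n:ℝ)^5) := by
      rw [Real.logb_le_logb (by norm_num) (by positivity) (by positivity)]
      exact hDle
    rw [Real.logb_pow] at this
    exact le_trans this (by norm_num)
  linarith
end
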